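/- Let p be a prime and G a finite group. Let C be a normal subset of G consisting of p-elements such that for all x, y ∈ C the subgroup ⟨x,y⟩ generated by x and y is a p-group. Then the subgroup ⟨C⟩ generated by C is a p-group. -/

import Mathlib

open Subgroup

universe u

variable {p : ℕ} [Fact p.Prime]

/-- `X` is a `C`-closed `p`-subgroup. -/
def BS.Good {G : Type*} [Group G] (p : ℕ) (C : Set G) (X : Subgroup G) : Prop :=
  IsPGroup p X ∧ closure (C ∩ X) = X

section GoodLemmas

variable {G : Type*} [Group G] {C : Set G}

omit [Fact p.Prime] in
lemma BS.good_bot : BS.Good p C (⊥ : Subgroup G) :=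
  ⟨IsPGroup.of_bot, le_antisymm ((closure_le _).mpr Set.inter_subset_right) bot_le⟩

omit [Fact p.Prime] in
lemma BS.good_single {c : G} (hc : c ∈ C) {k : ℕ} (hk : orderOf c = p ^ k) :
    BS.Good p C (closure {c}) := by
  refine ⟨?_, le_antisymm ((closure_le _).mpr Set.inter_subset_right) ?_⟩
  · rw [← Subgroup.zpowers_eq_closure]
    exact IsPGroup.of_card (by rw [Nat.card_zpowers, hk])
  · exact closure_mono (Set.singleton_subset_iff.mpr ⟨hc, subset_closure (Set.mem_singleton c)⟩)

omit [Fact p.Prime] in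
lemma BS.good_pair {c d : G} (hc : c ∈ C) (hd : d ∈ C)
    (hpg : IsPGroup p (closure {c, d} : Subgroup G)) :
    BS.Good p C (closure {c, d}) := by
  refine ⟨hpg, le_antisymm ((closure_le _).mpr Set.inter_subset_right) (closure_mono ?_)⟩
  rintro x (rfl | rfl)
  · exact ⟨hc, subset_closure (by simp)⟩
  · exact ⟨hd, subset_closure (by simp)⟩

lemma BS.good_ext {X : Subgroup G} (hX : BS.Good p C X) {c : G} (hc : c ∈ C)
    {k : ℕ} (hk : orderOf c = p ^ k) (hcN : c ∈ (normalizer (X : Set G))) :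
    BS.Good p C (closure {c} ⊔ X) := by
  constructor
  · refine IsPGroup.to_sup_of_normal_right' ?_ hX.1
      ((closure_le _).mpr (Set.singleton_subset_iff.mpr hcN))
    rw [← Subgroup.zpowers_eq_closure]
    exact IsPGroup.of_card (by rw [Nat.card_zpowers, hk])
  · apply le_antisymm ((closure_le _).mpr Set.inter_subset_right)
    have h1 : closure {c} ⊔ X = closure ({c} ∪ (C ∩ X)) := by
      rw [Subgroup.closure_union, hX.2]
    rw [h1]
    apply Subgroup.closure_mono
    rintro x (rfl | hx)
    · exact ⟨hc, subset_closure (Or.inl rfl)⟩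
    · exact ⟨hx.1, subset_closure (Or.inr hx)⟩

omit [Fact p.Prime] in
lemma BS.exists_max [Finite G] {X : Subgroup G} (hX : BS.Good p C X) :
    ∃ M, BS.Good p C M ∧ X ≤ M ∧ ∀ Y, BS.Good p C Y → M ≤ Y → Y = M := by
  haveI : Finite (Subgroup G) := Finite.of_injective _ (SetLike.coe_injective (A := Subgroup G))
  obtain ⟨M, ⟨hMg, hXM⟩, hMmax⟩ := Set.Finite.exists_maximalFor
    (fun Y : Subgroup G => Nat.card Y) {Y | BS.Good p C Y ∧ X ≤ Y} (Set.toFinite _)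
    ⟨X, hX, le_rfl⟩
  refine ⟨M, hMg, hXM, fun Y hY hMY => ?_⟩
  have h1 := hMmax ⟨hY, le_trans hXM hMY⟩ (Subgroup.card_le_of_le hMY)
  exact (Subgroup.eq_of_le_of_card_ge hMY h1.ge).symm

end GoodLemmas




/-- p-group property passes to smaller subgroups. -/
lemma BS.pgLe {G : Type*} [Group G] {H K : Subgroup G} (hK : IsPGroup p K) (hle : H ≤ K) :
    IsPGroup p H := by
  intro g
  obtain ⟨k, hk⟩ := hK ⟨g.1, hle g.2⟩
  refine ⟨k, ?_⟩
  rw [Subtype.ext_iff] at hk ⊢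
  push_cast at hk ⊢
  exact hk

lemma BS.pgSingleton {G : Type*} [Group G] {c : G} {n : ℕ} (hc : orderOf c = p ^ n) :
    IsPGroup p (closure {c} : Subgroup G) := by
  rw [← Subgroup.zpowers_eq_closure]
  exact IsPGroup.of_card (by rw [Nat.card_zpowers, hc])

/-- Growth lemma: if `S` is a normal subset of a finite `p`-group `P`, `E` is a subgroup
generated by `S ∩ E`, and `S ⊄ E`, then some element of `S` outside `E` normalizes `E`. -/
lemma BS.growth {P : Type*} [Group P] [Finite P] (hP : IsPGroup p P) (S : Set P)
    (hSnorm : ∀ s ∈ S, ∀ x : P, x⁻¹ * s * x ∈ S) (E : Subgroup P)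
    (hE : closure (S ∩ E) = E) (hS : ¬ S ⊆ E) :
    ∃ s ∈ S, s ∉ E ∧ s ∈ (normalizer (E : Set P)) := by
  classical
  haveI : Finite (Subgroup P) := Finite.of_injective _ (SetLike.coe_injective (A := Subgroup P))
  have hNC : NormalizerCondition P :=
    @normalizerCondition_of_isNilpotent P _ hP.isNilpotent
  -- maximal K with E ≤ K and S ∩ K ⊆ E
  obtain ⟨K, ⟨hEK, hSK⟩, hKmax⟩ := Set.Finite.exists_maximalFor (fun Y : Subgroup P => Nat.card Y)
    {K : Subgroup P | E ≤ K ∧ S ∩ K ⊆ E} (Set.toFinite _) ⟨E, le_rfl, Set.inter_subset_right⟩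
  have hKtop : K ≠ ⊤ := by
    rintro rfl
    exact hS (fun s hs => hSK ⟨hs, trivial⟩)
  have hKlt : K < (normalizer (K : Set P)) := hNC K (lt_top_iff_ne_top.mpr hKtop)
  -- normalizer not in the set
  have hnotin : ¬ (S ∩ (normalizer (K : Set P)) ⊆ E) := by
    intro hsub
    have : (normalizer (K : Set P)) ∈ {K : Subgroup P | E ≤ K ∧ S ∩ K ⊆ E} :=
      ⟨le_trans hEK le_normalizer, hsub⟩
    have hcard := hKmax this (Subgroup.card_le_of_le le_normalizer)
    exact hKlt.ne (Subgroup.eq_of_le_of_card_ge le_normalizer hcard.ge)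
  obtain ⟨s, hsS, hsN⟩ : ∃ s, s ∈ S ∧ s ∈ (normalizer (K : Set P)) ∧ s ∉ E := by
    rw [Set.not_subset] at hnotin
    obtain ⟨s, ⟨h1, h2⟩, h3⟩ := hnotin
    exact ⟨s, h1, h2, h3⟩
  refine ⟨s, hsS, hsN.2, ?_⟩
  -- E = closure (S ∩ K)
  have hEK' : closure (S ∩ K) = E := by
    apply le_antisymm
    · rw [closure_le]
      intro x hx
      exact hSK hx
    · conv_lhs => rw [← hE]
      exact closure_mono (Set.inter_subset_inter_right _ (fun x hx => hEK hx))
  -- conjugation by s preserves S ∩ K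
  have hconj : ∀ x, x ∈ S ∩ (K : Set P) ↔ s * x * s⁻¹ ∈ S ∩ (K : Set P) := by
    intro x
    constructor
    · rintro ⟨h1, h2⟩
      refine ⟨by simpa using hSnorm x h1 s⁻¹, ?_⟩
      exact (Subgroup.mem_normalizer_iff.mp hsN.1 x).mp h2
    · rintro ⟨h1, h2⟩
      have h1' := hSnorm _ h1 s
      have h2' := (Subgroup.mem_normalizer_iff.mp hsN.1 x).mpr h2
      constructor
      · have : s⁻¹ * (s * x * s⁻¹) * s = x := by group
        rwa [this] at h1'
      · exact h2'
  rw [Subgroup.mem_normalizer_iff]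
  intro h
  have key : (closure (S ∩ K) : Subgroup P).map (MulAut.conj s).toMonoidHom = closure (S ∩ K) := by
    rw [MonoidHom.map_closure]
    congr 1
    ext y
    constructor
    · rintro ⟨x, hx, rfl⟩
      exact (hconj x).mp hx
    · intro hy
      refine ⟨s⁻¹ * y * s, ?_, by simp [MulAut.conj]; group⟩
      have : y = s * (s⁻¹ * y * s) * s⁻¹ := by group
      rw [this] at hy
      exact (hconj _).mpr hy
  rw [hEK'] at key
  constructor
  · intro hh
    have : (MulAut.conj s).toMonoidHom h ∈ E := key ▸ Subgroup.mem_map_of_mem _ hh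
    simpa [MulAut.conj] using this
  · intro hh
    have : s * h * s⁻¹ ∈ E.map (MulAut.conj s).toMonoidHom := by rw [key]; exact hh
    obtain ⟨x, hx, hxe⟩ := this
    simp only [MulEquiv.coe_toMonoidHom, MulAut.conj_apply] at hxe
    have hx2 : x = h := mul_left_cancel (mul_right_cancel hxe)
    rwa [← hx2]

set_option maxHeartbeats 1600000 in
theorem BS.core (p : ℕ) [Fact p.Prime] : ∀ (n : ℕ) (G : Type u) [Group G] [Finite G],
    Nat.card G ≤ n → ∀ (C : Set G),
    (∀ c ∈ C, ∀ g : G, g⁻¹ * c * g ∈ C) →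
    (∀ x ∈ C, ∃ k : ℕ, orderOf x = p ^ k) →
    (∀ x ∈ C, ∀ y ∈ C, IsPGroup p (closure {x, y} : Subgroup G)) →
    IsPGroup p (closure C : Subgroup G) := by
  intro n
  induction n with
  | zero =>
    intro G _ _ hcard C _ _ _
    have := Nat.card_pos (α := G)
    omega
  | succ n IH =>
    intro G _ _ hcard C hnorm hpelt hpair
    classical
    by_cases hC1 : ∃ c ∈ C, c ≠ 1
    swap
    · push_neg at hC1
      have hle : closure C ≤ ⊥ := by
        rw [closure_le]
        intro c hc
        simp [hC1 c hc]
      exact BS.pgLe IsPGroup.of_bot hle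
    obtain ⟨c₀, hc₀C, hc₀1⟩ := hC1
    obtain ⟨k₀, hk₀⟩ := hpelt c₀ hc₀C
    by_contra hcon
    -- two distinct maximal good subgroups exist
    obtain ⟨M₀, hM₀g, hM₀le, hM₀max⟩ := BS.exists_max (BS.good_single hc₀C hk₀)
    by_cases huniq : ∃ M₁ M₂ : Subgroup G,
        (BS.Good p C M₁ ∧ ∀ Y, BS.Good p C Y → M₁ ≤ Y → Y = M₁) ∧
        (BS.Good p C M₂ ∧ ∀ Y, BS.Good p C Y → M₂ ≤ Y → Y = M₂) ∧ M₁ ≠ M₂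
    swap
    · push_neg at huniq
      apply hcon
      have hCM₀ : closure C ≤ M₀ := by
        rw [closure_le]
        intro c hc
        obtain ⟨k, hk⟩ := hpelt c hc
        obtain ⟨M', hM'g, hM'le, hM'max⟩ := BS.exists_max (BS.good_single hc hk)
        have := huniq M' M₀ ⟨hM'g, hM'max⟩ ⟨hM₀g, hM₀max⟩
        exact this ▸ hM'le (subset_closure (Set.mem_singleton c))
      exact BS.pgLe hM₀g.1 hCM₀
    obtain ⟨M₁', M₂', hM₁', hM₂', hne'⟩ := huniq
    -- choose E of maximal order among good subgroups inside two distinct maximal good subgroups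
    haveI : Finite (Subgroup G) := Finite.of_injective _ (SetLike.coe_injective (A := Subgroup G))
    set 𝒴 : Set (Subgroup G) := {X | BS.Good p C X ∧ ∃ Ma Mb : Subgroup G,
      (BS.Good p C Ma ∧ ∀ Y, BS.Good p C Y → Ma ≤ Y → Y = Ma) ∧
      (BS.Good p C Mb ∧ ∀ Y, BS.Good p C Y → Mb ≤ Y → Y = Mb) ∧
      Ma ≠ Mb ∧ X ≤ Ma ∧ X ≤ Mb} with h𝒴
    obtain ⟨E, hE𝒴, hEmax'⟩ := Set.Finite.exists_maximalFor
      (fun Y : Subgroup G => Nat.card Y) 𝒴 (Set.toFinite _)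
      ⟨⊥, BS.good_bot, M₁', M₂', hM₁', hM₂', hne', bot_le, bot_le⟩
    have hEabs : ∀ X, X ∈ 𝒴 → E ≤ X → X = E := by
      intro X hX hle
      exact (Subgroup.eq_of_le_of_card_ge hle
        (hEmax' hX (Subgroup.card_le_of_le hle)).ge).symm
    obtain ⟨hEgood, Ma, Mb, hMa, hMb, hab, hEMa, hEMb⟩ := hE𝒴
    by_cases hEbot : E = ⊥
    · -- Case A : E = ⊥
      subst hEbot
      have hMa_ne_bot : Ma ≠ ⊥ := by
        intro hbot
        have h0 := hMa.2 _ (BS.good_single hc₀C hk₀) (hbot ▸ bot_le)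
        apply hc₀1
        have : c₀ ∈ (⊥ : Subgroup G) := by
          rw [← hbot, ← h0]
          exact subset_closure (Set.mem_singleton c₀)
        simpa using this
      have h1 : ¬ (C ∩ ↑Ma ⊆ {(1 : G)}) := by
        intro hsub
        apply hMa_ne_bot
        rw [← hMa.1.2, ← le_bot_iff, closure_le]
        intro x hx
        have := hsub hx
        simpa using this
      obtain ⟨c, ⟨hcC, hcMa⟩, hc1⟩ := Set.not_subset.mp h1
      rw [Set.mem_singleton_iff] at hc1
      have h2 : ¬ (C ∩ ↑Mb ⊆ ↑Ma) := by
        intro hsub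
        apply hab
        have hle : Mb ≤ Ma := by
          rw [← hMb.1.2, closure_le]
          exact hsub
        exact hMb.2 Ma hMa.1 hle
      obtain ⟨d, ⟨hdC, hdMb⟩, hdMa⟩ := Set.not_subset.mp h2
      obtain ⟨M₃, hM₃g, hXM₃, hM₃max⟩ := BS.exists_max (BS.good_pair hcC hdC (hpair c hcC d hdC))
      by_cases h3 : M₃ = Ma
      · apply hdMa
        rw [← h3]
        exact hXM₃ (subset_closure (by simp))
      · have hmem : closure {c} ∈ 𝒴 := by
          refine ⟨?_, Ma, M₃, hMa, ⟨hM₃g, hM₃max⟩, fun h => h3 h.symm, ?_, ?_⟩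
          · obtain ⟨k, hk⟩ := hpelt c hcC
            exact BS.good_single hcC hk
          · rw [closure_le]
            exact Set.singleton_subset_iff.mpr hcMa
          · exact le_trans (Subgroup.closure_mono (by simp)) hXM₃
        have := hEabs _ hmem bot_le
        apply hc1
        have : c ∈ (⊥ : Subgroup G) := this ▸ subset_closure (Set.mem_singleton c)
        simpa using this
    · -- Case B : E ≠ ⊥
      by_cases hNtop : (normalizer (E : Set G)) = ⊤
      · -- B1 : E is normal; pass to the quotient
        have hEnormal : E.Normal := Subgroup.normalizer_eq_top_iff.mp hNtop
        have hcardQ : Nat.card (G ⧸ E) < Nat.card G := by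
          have h1 : Nat.card G = Nat.card (G ⧸ E) * Nat.card E :=
            Subgroup.card_eq_card_quotient_mul_card_subgroup E
          have h2 : 1 < Nat.card E := (Subgroup.one_lt_card_iff_ne_bot E).mpr hEbot
          have h3 : 0 < Nat.card (G ⧸ E) := Nat.card_pos
          calc Nat.card (G ⧸ E) < Nat.card (G ⧸ E) * Nat.card E := by
                exact (Nat.lt_mul_iff_one_lt_right h3).mpr h2
            _ = Nat.card G := h1.symm
        have hQle : Nat.card (G ⧸ E) ≤ n := by omega
        have hres := IH (G ⧸ E) hQle ((QuotientGroup.mk' E) '' C)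
          (by
            rintro _ ⟨c, hc, rfl⟩ g'
            obtain ⟨g, rfl⟩ := QuotientGroup.mk'_surjective E g'
            exact ⟨g⁻¹ * c * g, hnorm c hc g, by simp⟩)
          (by
            rintro _ ⟨c, hc, rfl⟩
            obtain ⟨k, hk⟩ := hpelt c hc
            have hdvd : orderOf ((QuotientGroup.mk' E) c) ∣ p ^ k :=
              hk ▸ orderOf_map_dvd _ c
            obtain ⟨m, _, hm⟩ := (Nat.dvd_prime_pow (Fact.out : p.Prime)).mp hdvd
            exact ⟨m, hm⟩)
          (by
            rintro _ ⟨x, hx, rfl⟩ _ ⟨y, hy, rfl⟩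
            have heq : (closure {(QuotientGroup.mk' E) x, (QuotientGroup.mk' E) y} :
                Subgroup (G ⧸ E)) = (closure {x, y}).map (QuotientGroup.mk' E) := by
              rw [MonoidHom.map_closure, Set.image_pair]
            rw [heq]
            exact (hpair x hx y hy).map _)
        apply hcon
        intro g
        have hg : (QuotientGroup.mk' E) g.1 ∈ closure ((QuotientGroup.mk' E) '' C) := by
          rw [← MonoidHom.map_closure]
          exact Subgroup.mem_map_of_mem _ g.2
        obtain ⟨k, hk⟩ := hres ⟨_, hg⟩
        rw [Subtype.ext_iff] at hk
        push_cast at hk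
        have hmem : g.1 ^ p ^ k ∈ E := by
          rw [← QuotientGroup.ker_mk' E, MonoidHom.mem_ker, map_pow]
          exact hk
        obtain ⟨j, hj⟩ := hEgood.1 ⟨_, hmem⟩
        rw [Subtype.ext_iff] at hj
        push_cast at hj
        refine ⟨k + j, ?_⟩
        rw [Subtype.ext_iff]
        push_cast
        calc g.1 ^ p ^ (k + j) = (g.1 ^ p ^ k) ^ p ^ j := by
              rw [← pow_mul, pow_add]
          _ = 1 := hj
      · -- B2 : N := normalizer E is proper
        have hNlt : Nat.card (normalizer (E : Set G)) < Nat.card G := by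
          have h1 : Nat.card (normalizer (E : Set G)) ≤ Nat.card G := by
            have := Subgroup.card_le_of_le (le_top : (normalizer (E : Set G)) ≤ ⊤)
            rwa [Subgroup.card_top] at this
          rcases h1.lt_or_eq with h | h
          · exact h
          · exact absurd (Subgroup.card_eq_iff_eq_top _ |>.mp h) hNtop
        have hNle : Nat.card (normalizer (E : Set G)) ≤ n := by omega
        have hres := IH ↥(normalizer (E : Set G)) hNle (Subtype.val ⁻¹' C)
          (by
            intro c hc g
            show ((g⁻¹ * c * g : ↥(normalizer (E : Set G))) : G) ∈ C
            push_cast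
            exact hnorm _ hc _)
          (by
            intro x hx
            obtain ⟨k, hk⟩ := hpelt _ hx
            exact ⟨k, by rw [← orderOf_injective (normalizer (E : Set G)).subtype
              (Subgroup.subtype_injective _) x]; exact hk⟩)
          (by
            intro x hx y hy
            have h1 : IsPGroup p ((closure {(x : G), (y : G)}).comap (normalizer (E : Set G)).subtype) :=
              (hpair _ hx _ hy).comap_of_injective _ (Subgroup.subtype_injective _)
            apply BS.pgLe h1
            rw [closure_le]
            rintro z hz
            simp only [Set.mem_insert_iff, Set.mem_singleton_iff] at hz
            rcases hz with rfl | rfl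
            · exact subset_closure (by simp)
            · exact subset_closure (by simp))
        set F : Subgroup G := closure (C ∩ ↑(normalizer (E : Set G))) with hF
        have hFeq : (closure (Subtype.val ⁻¹' C : Set ↥(normalizer (E : Set G)))).map (normalizer (E : Set G)).subtype
            = F := by
          rw [MonoidHom.map_closure]
          congr 1
          rw [Subgroup.coe_subtype, Set.image_preimage_eq_inter_range,
            Subtype.range_coe_subtype]
          rfl
        have hFpg : IsPGroup p F := hFeq ▸ hres.map _
        have hEF : E ≤ F := by
          conv_lhs => rw [← hEgood.2]
          exact Subgroup.closure_mono
            (Set.inter_subset_inter_right _ (fun x hx => Subgroup.le_normalizer hx))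
        have hFgood : BS.Good p C F := by
          refine ⟨hFpg, le_antisymm ((closure_le _).mpr Set.inter_subset_right) ?_⟩
          conv_lhs => rw [hF]
          exact Subgroup.closure_mono (fun x hx => ⟨hx.1, subset_closure hx⟩)
        obtain ⟨M₃, hM₃g, hFM₃, hM₃max⟩ := BS.exists_max hFgood
        -- growth lemma application
        have mkC : ∀ M : Subgroup G, BS.Good p C M → E ≤ M → M ≠ E →
            ∃ c, c ∈ C ∧ c ∈ M ∧ c ∉ E ∧ c ∈ (normalizer (E : Set G)) := by
          intro M hMg hEM hMne
          have hSnorm : ∀ s ∈ (Subtype.val ⁻¹' C : Set ↥M), ∀ x : ↥M,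
              x⁻¹ * s * x ∈ (Subtype.val ⁻¹' C : Set ↥M) := by
            intro s hs x
            show ((x⁻¹ * s * x : ↥M) : G) ∈ C
            push_cast
            exact hnorm _ hs _
          have hE' : closure ((Subtype.val ⁻¹' C : Set ↥M) ∩ (E.subgroupOf M)) =
              E.subgroupOf M := by
            apply Subgroup.map_injective (Subgroup.subtype_injective M)
            rw [MonoidHom.map_closure, Subgroup.subgroupOf_map_subtype]
            have himg : M.subtype '' ((Subtype.val ⁻¹' C : Set ↥M) ∩ (E.subgroupOf M))
                = C ∩ ↑E := by
              ext y
              constructor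
              · rintro ⟨x, ⟨hxC, hxE⟩, rfl⟩
                exact ⟨hxC, Subgroup.mem_subgroupOf.mp hxE⟩
              · rintro ⟨hyC, hyE⟩
                exact ⟨⟨y, hEM hyE⟩, ⟨hyC, Subgroup.mem_subgroupOf.mpr hyE⟩, rfl⟩
            rw [himg, hEgood.2, inf_eq_left.mpr hEM]
          have hSnsub : ¬ (Subtype.val ⁻¹' C : Set ↥M) ⊆ ↑(E.subgroupOf M) := by
            intro hsub
            apply hMne
            have hle : M ≤ E := by
              conv_lhs => rw [← hMg.2]
              rw [closure_le]
              rintro x ⟨hxC, hxM⟩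
              exact Subgroup.mem_subgroupOf.mp (hsub (show ((⟨x, hxM⟩ : ↥M) : G) ∈ C from hxC))
            exact le_antisymm hle hEM
          obtain ⟨s, hsS, hsE', hsN'⟩ := BS.growth hMg.1 _ hSnorm (E.subgroupOf M) hE' hSnsub
          refine ⟨↑s, hsS, s.2, fun h => hsE' (Subgroup.mem_subgroupOf.mpr h), ?_⟩
          rw [Subgroup.mem_normalizer_iff]
          intro h
          constructor
          · intro hh
            have h1 : (⟨h, hEM hh⟩ : ↥M) ∈ E.subgroupOf M := Subgroup.mem_subgroupOf.mpr hh
            have h2 := (Subgroup.mem_normalizer_iff.mp hsN' ⟨h, hEM hh⟩).mp h1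
            have h3 := Subgroup.mem_subgroupOf.mp h2
            push_cast at h3
            exact h3
          · intro hh
            have hhM : h ∈ M := by
              have h4 : (↑s : G) * h * (↑s : G)⁻¹ ∈ M := hEM hh
              have h5 : h = (↑s : G)⁻¹ * ((↑s : G) * h * (↑s : G)⁻¹) * (↑s : G) := by group
              rw [h5]
              exact Subgroup.mul_mem _ (Subgroup.mul_mem _ (Subgroup.inv_mem _ s.2) h4) s.2
            have h3 : s * (⟨h, hhM⟩ : ↥M) * s⁻¹ ∈ E.subgroupOf M := by
              apply Subgroup.mem_subgroupOf.mpr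
              push_cast
              exact hh
            have h4 := (Subgroup.mem_normalizer_iff.mp hsN' ⟨h, hhM⟩).mpr h3
            exact Subgroup.mem_subgroupOf.mp h4
        have hMaE : Ma ≠ E := by
          intro h
          exact hab (hMa.2 Mb hMb.1 (h ▸ hEMb)).symm
        have hMbE : Mb ≠ E := by
          intro h
          exact hab (hMb.2 Ma hMa.1 (h ▸ hEMa))
        obtain ⟨c₁, hc₁C, hc₁Ma, hc₁E, hc₁N⟩ := mkC Ma hMa.1 hEMa hMaE
        obtain ⟨k₁, hk₁⟩ := hpelt c₁ hc₁C
        by_cases h3 : M₃ = Ma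
        · obtain ⟨c₂, hc₂C, hc₂Mb, hc₂E, hc₂N⟩ := mkC Mb hMb.1 hEMb hMbE
          obtain ⟨k₂, hk₂⟩ := hpelt c₂ hc₂C
          have hX₂good := BS.good_ext hEgood hc₂C hk₂ hc₂N
          have hmem : (closure {c₂} ⊔ E) ∈ 𝒴 := by
            refine ⟨hX₂good, Mb, Ma, hMb, hMa, Ne.symm hab, ?_, ?_⟩
            · exact sup_le ((closure_le _).mpr (Set.singleton_subset_iff.mpr hc₂Mb)) hEMb
            · refine le_trans (sup_le ?_ hEF) (h3 ▸ hFM₃)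
              rw [closure_le]
              exact Set.singleton_subset_iff.mpr (subset_closure ⟨hc₂C, hc₂N⟩)
          have heq := hEabs _ hmem le_sup_right
          apply hc₂E
          rw [← heq]
          exact Subgroup.mem_sup_left (subset_closure (Set.mem_singleton c₂))
        · have hX₁good := BS.good_ext hEgood hc₁C hk₁ hc₁N
          have hmem : (closure {c₁} ⊔ E) ∈ 𝒴 := by
            refine ⟨hX₁good, Ma, M₃, hMa, ⟨hM₃g, hM₃max⟩, fun h => h3 h.symm, ?_, ?_⟩
            · exact sup_le ((closure_le _).mpr (Set.singleton_subset_iff.mpr hc₁Ma)) hEMa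
            · refine le_trans (sup_le ?_ hEF) hFM₃
              rw [closure_le]
              exact Set.singleton_subset_iff.mpr (subset_closure ⟨hc₁C, hc₁N⟩)
          have heq := hEabs _ hmem le_sup_right
          apply hc₁E
          rw [← heq]
          exact Subgroup.mem_sup_left (subset_closure (Set.mem_singleton c₁))

/-- **The Baer–Suzuki theorem, normal subset form.**
If `C` is a normal subset of a finite group `G` consisting of `p`-elements such that
`⟨x, y⟩` is a `p`-group for all `x, y ∈ C`, then `⟨C⟩` is a `p`-group. -/
theorem statement_5 {G : Type*} [Group G] [Fintype G] (p : ℕ) [Fact p.Prime]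
    (C : Set G)
    (hnorm : ∀ c ∈ C, ∀ g : G, g⁻¹ * c * g ∈ C)
    (hpelt : ∀ x ∈ C, ∃ n : ℕ, orderOf x = p ^ n)
    (h : ∀ x ∈ C, ∀ y ∈ C, IsPGroup p ↥(Subgroup.closure {x, y})) :
    IsPGroup p ↥(Subgroup.closure C) := by
  exact BS.core p (Nat.card G) G le_rfl C hnorm hpelt h
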